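/- arXiv:1402.3831 — 2 statements merged into one kernel-verified Lean document; each statement's English description precedes it below -/
import Mathlib

section
/- For every (θ, L) ∈ D_1, one has L > L_d(θ), the critical point X_m = X_m(θ, L) satisfies 0 < X_m < θ̃ (so X_m ∈ D) and f(X_m) < 0 = f(0), and X_m is the unique global minimizer of f on D: f(X) > f(X_m) for every X ∈ D with X ≠ X_m. -/
open Real Set

/-- The auxiliary energy `f(X) = (θ - X)^(-1/2) - L·X²` for `0 < X < θ`, with `f(0) = 0`. -/
noncomputable def f (θ L X : ℝ) : ℝ :=
  if X = 0 then 0 else (θ - X) ^ (-(1:ℝ)/2) - L * X ^ 2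

/-- `L_d(θ) = (25/24)·√(5/3)·θ^(-5/2)`. -/
noncomputable def Ld (θ : ℝ) : ℝ := (25/24) * Real.sqrt (5/3) * θ ^ (-(5:ℝ)/2)

/-- `θ* = (5/4)·α^(-1/2)`. -/
noncomputable def θstar (α : ℝ) : ℝ := (5/4) * α ^ (-(1:ℝ)/2)

/-- `L_01(θ) = (5^(5/2)/16)·θ^(-5/2)`. -/
noncomputable def L01 (θ : ℝ) : ℝ := ((5:ℝ) ^ ((5:ℝ)/2) / 16) * θ ^ (-(5:ℝ)/2)

/-- `L_02(θ) = α^(5/4)·(√α·θ - 1)^(-1/2)`. -/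
noncomputable def L02 (α θ : ℝ) : ℝ := α ^ ((5:ℝ)/4) * (Real.sqrt α * θ - 1) ^ (-(1:ℝ)/2)

/-- `L_12(θ) = (2α³θ + 2α²√(α(αθ² - 1)))^(1/2)`. -/
noncomputable def L12 (α θ : ℝ) : ℝ :=
  Real.sqrt (2*α^3*θ + 2*α^2 * Real.sqrt (α*(α*θ^2 - 1)))


lemma sq_rpow' (x : ℝ) (hx : 0 ≤ x) (p : ℝ) : (x ^ p)^2 = x ^ (2*p) := by
  rw [← Real.rpow_natCast (x ^ p) 2, ← Real.rpow_mul hx]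
  ring_nf

lemma rpow_pack (y : ℝ) (hy : 0 < y) :
    0 < y ^ ((3:ℝ)/2) ∧ (y ^ ((3:ℝ)/2))^2 = y^3 ∧
    y ^ (-(3:ℝ)/2) = (y ^ ((3:ℝ)/2))⁻¹ ∧ y ^ (-(1:ℝ)/2) = y / y ^ ((3:ℝ)/2) := by
  refine ⟨Real.rpow_pos_of_pos hy _, ?_, ?_, ?_⟩
  · rw [sq_rpow' y hy.le]
    norm_num
  · rw [show -(3:ℝ)/2 = -((3:ℝ)/2) by norm_num, Real.rpow_neg hy.le]
  · rw [show -(1:ℝ)/2 = 1 + -((3:ℝ)/2) by norm_num, Real.rpow_add hy, Real.rpow_one,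
      Real.rpow_neg hy.le]
    ring

lemma eq_iff' (θ L X : ℝ) (hX : 0 < X) (hXθ : X < θ) (hL : 0 < L) :
    ((1/2) * (θ - X) ^ (-(3:ℝ)/2) = 2*L*X) ↔ 16*L^2*(X^2*(θ - X)^3) = 1 := by
  have hy : 0 < θ - X := by linarith
  obtain ⟨hr, hr2, hneg, _⟩ := rpow_pack (θ - X) hy
  rw [hneg]
  set r := (θ - X) ^ ((3:ℝ)/2) with hrdef
  constructor
  · intro h
    have h4 : 4*L*X*r = 1 := by
      field_simp at h
      nlinarith [hr]
    have h4sq : 16*L^2*X^2*r^2 = 1 := by nlinarith [h4]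
    linear_combination h4sq - 16*L^2*X^2*hr2
  · intro h
    have h4sq : (4*L*X*r)^2 = 1 := by linear_combination h + 16*L^2*X^2*hr2
    have h4 : 4*L*X*r = 1 := by
      have hz : (4*L*X*r - 1)*(4*L*X*r + 1) = 0 := by linear_combination h4sq
      rcases mul_eq_zero.1 hz with h1 | h1
      · linarith
      · nlinarith [mul_pos (mul_pos (mul_pos (by norm_num : (0:ℝ)<4) hL) hX) hr]
    rw [eq_comm]
    field_simp
    linarith [h4]

lemma g_hasDeriv (θ x : ℝ) : HasDerivAt (fun X : ℝ => X^2*(θ - X)^3)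
    (2*x*(θ-x)^3 - 3*x^2*(θ-x)^2) x := by
  have h1 : HasDerivAt (fun X : ℝ => X^2) (2*x) x := by
    simpa using hasDerivAt_pow 2 x
  have hb : HasDerivAt (fun X : ℝ => θ - X) (-1) x := (hasDerivAt_id x).const_sub θ
  have h2 : HasDerivAt (fun X : ℝ => (θ - X)^3) ((3*(θ-x)^2) * (-1)) x := by
    have := HasDerivAt.comp x (show HasDerivAt (fun y : ℝ => y^3) (3*(θ-x)^2) (θ-x) by
      simpa using hasDerivAt_pow 3 (θ - x)) hb
    exact this
  have := h1.mul h2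
  exact this.congr_deriv (by ring)

lemma g_anti (θ : ℝ) (hθ : 0 < θ) :
    StrictAntiOn (fun X : ℝ => X^2*(θ - X)^3) (Icc (2*θ/5) θ) := by
  apply strictAntiOn_of_deriv_neg (convex_Icc _ _)
  · exact (Continuous.continuousOn (by continuity))
  · intro x hx
    rw [interior_Icc] at hx
    rw [(g_hasDeriv θ x).deriv]
    have hx0 : 0 < x := lt_trans (by linarith [hx.1]) hx.1
    have h1 : 0 < θ - x := by linarith [hx.2]
    have h2 : 0 < 5*x - 2*θ := by linarith [hx.1]
    nlinarith [mul_pos (mul_pos hx0 (mul_pos h1 h1)) h2]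

lemma g_mono (θ : ℝ) (hθ : 0 < θ) :
    StrictMonoOn (fun X : ℝ => X^2*(θ - X)^3) (Icc 0 (2*θ/5)) := by
  apply strictMonoOn_of_deriv_pos (convex_Icc _ _)
  · exact (Continuous.continuousOn (by continuity))
  · intro x hx
    rw [interior_Icc] at hx
    have hx0 : 0 < x := hx.1
    have h1 : 0 < θ - x := by linarith [hx.2]
    have h2 : 0 < 2*θ - 5*x := by linarith [hx.2]
    rw [(g_hasDeriv θ x).deriv]
    nlinarith [mul_pos (mul_pos hx0 (mul_pos h1 h1)) h2]
lemma F_hasDeriv (θ L x : ℝ) (hx : 0 < θ - x) :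
    HasDerivAt (fun X : ℝ => (θ - X) ^ (-(1:ℝ)/2) - L*X^2)
      ((1/2) * (θ - x) ^ (-(3:ℝ)/2) - 2*L*x) x := by
  have hb : HasDerivAt (fun X : ℝ => θ - X) (-1) x := (hasDerivAt_id x).const_sub θ
  have h1 : HasDerivAt (fun X : ℝ => (θ - X) ^ (-(1:ℝ)/2))
      ((-(1:ℝ)/2) * (θ - x) ^ (-(1:ℝ)/2 - 1) * (-1)) x := by
    have := HasDerivAt.comp x (Real.hasDerivAt_rpow_const
      (p := -(1:ℝ)/2) (Or.inl (ne_of_gt hx))) hb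
    exact this
  have h2 : HasDerivAt (fun X : ℝ => L*X^2) (L*(2*x)) x := by
    have := (hasDerivAt_pow 2 x).const_mul L
    simpa using this
  have := h1.sub h2
  exact this.congr_deriv (by rw [show (-(1:ℝ)/2 - 1) = -(3:ℝ)/2 by norm_num]; ring)

/-- Sign of F' from the polynomial criterion. -/
lemma Fderiv_neg (θ L x : ℝ) (hL : 0 < L) (hx0 : 0 < x) (hxθ : x < θ)
    (h16 : 1 < 16*L^2*(x^2*(θ - x)^3)) :
    (1/2) * (θ - x) ^ (-(3:ℝ)/2) - 2*L*x < 0 := by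
  have hy : 0 < θ - x := by linarith
  obtain ⟨hr, hr2, hneg, _⟩ := rpow_pack (θ - x) hy
  rw [hneg]
  set r := (θ - x) ^ ((3:ℝ)/2)
  have h16' : 1 < 16*L^2*x^2*r^2 := by rw [← hr2] at h16; linarith
  have key : 1 < 4*L*x*r := by nlinarith [mul_pos (mul_pos (mul_pos (by norm_num : (0:ℝ)<4) hL) hx0) hr]
  rw [show (1:ℝ)/2 * r⁻¹ - 2*L*x = (1/2 - 2*L*x*r)/r by field_simp]
  apply div_neg_of_neg_of_pos _ hr
  linarith

lemma Fderiv_pos (θ L x : ℝ) (hL : 0 < L) (hx0 : 0 < x) (hxθ : x < θ)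
    (h16 : 16*L^2*(x^2*(θ - x)^3) < 1) :
    0 < (1/2) * (θ - x) ^ (-(3:ℝ)/2) - 2*L*x := by
  have hy : 0 < θ - x := by linarith
  obtain ⟨hr, hr2, hneg, _⟩ := rpow_pack (θ - x) hy
  rw [hneg]
  set r := (θ - x) ^ ((3:ℝ)/2)
  have h16' : 16*L^2*x^2*r^2 < 1 := by rw [← hr2] at h16; linarith
  have key : 4*L*x*r < 1 := by nlinarith [mul_pos (mul_pos (mul_pos (by norm_num : (0:ℝ)<4) hL) hx0) hr]
  rw [show (1:ℝ)/2 * r⁻¹ - 2*L*x = (1/2 - 2*L*x*r)/r by field_simp]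
  apply div_pos _ hr
  linarith
/-- F is strictly decreasing from a to b when 16L²g > 1 between them. -/
lemma F_dec (θ L a b : ℝ) (hL : 0 < L) (h0 : 0 < a) (hab : a < b) (hb : b < θ)
    (hder : ∀ Y ∈ Ioo a b, 1 < 16*L^2*(Y^2*(θ - Y)^3)) :
    (θ - b) ^ (-(1:ℝ)/2) - L*b^2 < (θ - a) ^ (-(1:ℝ)/2) - L*a^2 := by
  have hA : StrictAntiOn (fun X : ℝ => (θ - X) ^ (-(1:ℝ)/2) - L*X^2) (Icc a b) := by
    apply strictAntiOn_of_deriv_neg (convex_Icc _ _)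
    · intro x hx
      exact (F_hasDeriv θ L x (by cases hx; linarith)).continuousAt.continuousWithinAt
    · intro x hx
      rw [interior_Icc] at hx
      rw [(F_hasDeriv θ L x (by cases hx; linarith)).deriv]
      exact Fderiv_neg θ L x hL (by cases hx; linarith) (by cases hx; linarith) (hder x hx)
  exact hA (left_mem_Icc.2 hab.le) (right_mem_Icc.2 hab.le) hab

lemma F_inc (θ L a b : ℝ) (hL : 0 < L) (h0 : 0 < a) (hab : a < b) (hb : b < θ)
    (hder : ∀ Y ∈ Ioo a b, 16*L^2*(Y^2*(θ - Y)^3) < 1) :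
    (θ - a) ^ (-(1:ℝ)/2) - L*a^2 < (θ - b) ^ (-(1:ℝ)/2) - L*b^2 := by
  have hA : StrictMonoOn (fun X : ℝ => (θ - X) ^ (-(1:ℝ)/2) - L*X^2) (Icc a b) := by
    apply strictMonoOn_of_deriv_pos (convex_Icc _ _)
    · intro x hx
      exact (F_hasDeriv θ L x (by cases hx; linarith)).continuousAt.continuousWithinAt
    · intro x hx
      rw [interior_Icc] at hx
      rw [(F_hasDeriv θ L x (by cases hx; linarith)).deriv]
      exact Fderiv_pos θ L x hL (by cases hx; linarith) (by cases hx; linarith) (hder x hx)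
  exact hA (left_mem_Icc.2 hab.le) (right_mem_Icc.2 hab.le) hab
lemma L01_sq (θ : ℝ) (hθ : 0 < θ) : (L01 θ)^2 = 3125/(256*θ^5) := by
  rw [L01]
  rw [mul_pow, div_pow, sq_rpow' (5:ℝ) (by norm_num), sq_rpow' θ hθ.le]
  rw [show (2:ℝ)*((5:ℝ)/2) = ((5:ℕ):ℝ) by norm_num,
      show (2:ℝ)*(-(5:ℝ)/2) = -((5:ℕ):ℝ) by norm_num,
      Real.rpow_neg hθ.le, Real.rpow_natCast, Real.rpow_natCast]
  field_simp
  ring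

lemma Ld_sq (θ : ℝ) (hθ : 0 < θ) : (Ld θ)^2 = 3125/(1728*θ^5) := by
  rw [Ld]
  rw [mul_pow, mul_pow, sq_rpow' θ hθ.le, Real.sq_sqrt (by norm_num : (0:ℝ) ≤ 5/3)]
  rw [show (2:ℝ)*(-(5:ℝ)/2) = -((5:ℕ):ℝ) by norm_num,
      Real.rpow_neg hθ.le, Real.rpow_natCast]
  field_simp
  ring

lemma theta_of_le (α θ : ℝ) (hα : 0 < α) (hθ : 0 < θ) (h : θ ≤ θstar α) :
    α*θ^2 ≤ 25/16 := by
  rw [θstar, show -(1:ℝ)/2 = -((1:ℝ)/2) by norm_num, Real.rpow_neg hα.le,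
    ← Real.sqrt_eq_rpow] at h
  have hs : 0 < Real.sqrt α := Real.sqrt_pos.2 hα
  have h2 : Real.sqrt α * θ ≤ 5/4 := by
    calc Real.sqrt α * θ ≤ Real.sqrt α * (5/4 * (Real.sqrt α)⁻¹) :=
          mul_le_mul_of_nonneg_left h hs.le
      _ = 5/4 := by field_simp
  nlinarith [Real.sq_sqrt hα.le, mul_nonneg hs.le hθ.le]

lemma theta_of_gt (α θ : ℝ) (hα : 0 < α) (hθ : 0 < θ) (h : θstar α < θ) :
    25/16 < α*θ^2 := by
  rw [θstar, show -(1:ℝ)/2 = -((1:ℝ)/2) by norm_num, Real.rpow_neg hα.le,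
    ← Real.sqrt_eq_rpow] at h
  have hs : 0 < Real.sqrt α := Real.sqrt_pos.2 hα
  have h2 : 5/4 < Real.sqrt α * θ := by
    calc (5:ℝ)/4 = Real.sqrt α * (5/4 * (Real.sqrt α)⁻¹) := by field_simp
      _ < Real.sqrt α * θ := by apply mul_lt_mul_of_pos_left h hs
  nlinarith [Real.sq_sqrt hα.le]
lemma qpos_of_root (α θ L s : ℝ) (hα : 0 < α) (hs0 : 0 ≤ s)
    (hs2 : s^2 = α*(α*θ^2 - 1)) (hL2 : 2*α^3*θ + 2*α^2*s < L^2) :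
    4*α^3*θ*L^2 < L^4 + 4*α^5 := by
  have h1 : 0 < L^2 - (2*α^3*θ + 2*α^2*s) := by linarith
  have h2 : 0 < L^2 - (2*α^3*θ - 2*α^2*s) := by
    have : 0 ≤ 2*α^2*s := by positivity
    linarith
  have hs2' : 4*α^4*s^2 = 4*α^4*(α*(α*θ^2 - 1)) := by rw [hs2]
  nlinarith [mul_pos h1 h2, hs2']

lemma branch1_facts (α θ L : ℝ) (hα : 0 < α) (hθ : 0 < θ) (hL : 0 < L)
    (ha : α*θ^2 ≤ 25/16) (hP2 : 3125 < 256*θ^5*L^2) :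
    4*α^3*θ*L^2 < L^4 + 4*α^5 ∧ 8*α^3*θ < 5*L^2 := by
  constructor
  · by_cases ha1 : α*θ^2 ≤ 1
    · have h4 : 4*α^3*θ < L^2 := by
        nlinarith [pow_le_pow_left₀ (by positivity : (0:ℝ) ≤ α*θ^2) ha1 3, pow_pos hθ 5]
      nlinarith [mul_lt_mul_of_pos_right h4 (pow_pos hL 2), pow_pos hα 5]
    · push_neg at ha1
      have hδ : 0 ≤ α*(α*θ^2 - 1) := by nlinarith
      set s := Real.sqrt (α*(α*θ^2 - 1)) with hsdef
      have hs0 : 0 ≤ s := Real.sqrt_nonneg _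
      have hs2 : s^2 = α*(α*θ^2 - 1) := Real.sq_sqrt hδ
      have hs3 : 16*θ*s ≤ 15 := by
        have hsq : (16*θ*s)^2 ≤ 225 := by nlinarith [hs2]
        nlinarith [mul_nonneg (mul_nonneg (by norm_num : (0:ℝ) ≤ 16) hθ.le) hs0]
      have hroot2 : 512*α^3*θ^6 + 480*α^2*θ^4 ≤ 3125 := by
        nlinarith [mul_nonneg (by nlinarith : (0:ℝ) ≤ 25/16 - α*θ^2)
          (by positivity : (0:ℝ) ≤ 512*(α*θ^2)^2 + 1280*(α*θ^2) + 2000)]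
      have hL2' : 2*α^3*θ + 2*α^2*s < L^2 := by
        nlinarith [mul_le_mul_of_nonneg_left hs3 (by positivity : (0:ℝ) ≤ 32*α^2*θ^4),
          pow_pos hθ 5]
      exact qpos_of_root α θ L s hα hs0 hs2 hL2'
  · nlinarith [pow_le_pow_left₀ (by positivity : (0:ℝ) ≤ α*θ^2) ha 3, pow_pos hθ 5]

lemma branch2_facts (α θ L : ℝ) (hα : 0 < α) (hθ : 0 < θ) (hL : 0 < L)
    (ha : 25/16 < α*θ^2) (hL12 : L12 α θ < L) :
    3125 < 256*θ^5*L^2 ∧ 4*α^3*θ*L^2 < L^4 + 4*α^5 ∧ 8*α^3*θ < 5*L^2 := by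
  set s := Real.sqrt (α*(α*θ^2 - 1)) with hsdef
  have hδ : 0 ≤ α*(α*θ^2 - 1) := by nlinarith
  have hs0 : 0 ≤ s := Real.sqrt_nonneg _
  have hs2 : s^2 = α*(α*θ^2 - 1) := Real.sq_sqrt hδ
  have hL2 : 2*α^3*θ + 2*α^2*s < L^2 := by
    have := (Real.sqrt_lt' hL).1 hL12
    linarith [this]
  have smin : 3/5*(α*θ) ≤ s := by
    nlinarith [hs2, hs0, mul_pos hα hθ]
  have h165 : 16/5*(α^3*θ) < L^2 := by
    nlinarith [mul_le_mul_of_nonneg_left smin (by positivity : (0:ℝ) ≤ 2*α^2)]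
  refine ⟨?_, qpos_of_root α θ L s hα hs0 hs2 hL2, ?_⟩
  · have hcube : (25/16:ℝ)^3 < (α*θ^2)^3 :=
      pow_lt_pow_left₀ ha (by norm_num) (by norm_num)
    nlinarith [mul_lt_mul_of_pos_right h165 (pow_pos hθ 5), hcube]
  · nlinarith [mul_pos (pow_pos hα 3) hθ]
lemma Xm45_lemma (θ L Xm : ℝ) (hθ : 0 < θ) (hL : 0 < L)
    (hP2 : 3125 < 256*θ^5*L^2) (hXmIcc : Xm ∈ Icc (2*θ/5) θ)
    (hEq16 : 16*L^2*(Xm^2*(θ - Xm)^3) = 1) : 4*θ/5 < Xm := by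
  by_contra hcon
  push_neg at hcon
  have h45 : (4*θ/5) ∈ Icc (2*θ/5) θ := ⟨by linarith, by linarith⟩
  have hg45 : 1 < 16*L^2*((4*θ/5)^2*(θ - 4*θ/5)^3) := by nlinarith [hP2]
  rcases eq_or_lt_of_le hcon with heq | hlt
  · rw [heq] at hEq16; linarith
  · have := g_anti θ hθ hXmIcc h45 hlt
    simp only at this
    have h' := mul_lt_mul_of_pos_left this (by positivity : (0:ℝ) < 16*L^2)
    linarith

lemma Xmc_lemma (α θ L Xm : ℝ) (hα : 0 < α) (hθ : 0 < θ) (hL : 0 < L)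
    (hXm25 : 2*θ/5 < Xm) (hXmθ : Xm < θ)
    (hEq16 : 16*L^2*(Xm^2*(θ - Xm)^3) = 1)
    (P3 : 4*α^3*θ*L^2 < L^4 + 4*α^5) (P4 : 8*α^3*θ < 5*L^2) :
    4*α^3*Xm < L^2 := by
  by_cases hcθ : θ ≤ L^2/(4*α^3)
  · have : 4*α^3*θ ≤ L^2 := by
      rw [le_div_iff₀ (by positivity)] at hcθ; linarith
    nlinarith [mul_lt_mul_of_pos_left hXmθ (by positivity : (0:ℝ) < 4*α^3)]
  · push_neg at hcθ
    rw [div_lt_iff₀ (by positivity : (0:ℝ) < 4*α^3)] at hcθ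
    obtain ⟨c, hc4⟩ : ∃ c, 4*α^3*c = L^2 := ⟨L^2/(4*α^3), by field_simp⟩
    have hcθ' : c < θ := by nlinarith [pow_pos hα 3]
    have hc25 : 2*θ/5 < c := by nlinarith [P4, pow_pos hα 3]
    have hcIcc : c ∈ Icc (2*θ/5) θ := ⟨hc25.le, hcθ'.le⟩
    have hXmIcc : Xm ∈ Icc (2*θ/5) θ := ⟨hXm25.le, hXmθ.le⟩
    have hx : L^2*(θ - c) < α^2 := by nlinarith [P3, hc4, pow_pos hα 3]
    have hxnn : 0 ≤ L^2*(θ - c) := by nlinarith [pow_pos hL 2]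
    have hcube : (L^2*(θ - c))^3 < (α^2)^3 := by
      apply pow_lt_pow_left₀ hx hxnn (by norm_num)
    have hc4sq : 16*α^6*c^2 = L^4 := by nlinarith [hc4]
    have hL6 : L^6*(θ - c)^3 < α^6 := by nlinarith [hcube]
    have hkeyc : (16*L^2*(c^2*(θ - c)^3))*α^6 = L^6*(θ - c)^3 := by
      linear_combination (L^2*(θ - c)^3)*hc4sq
    have h16c : 16*L^2*(c^2*(θ - c)^3) < 1 := by
      nlinarith [hkeyc, hL6, pow_pos hα 6]
    have hgc : (fun X : ℝ => X^2*(θ - X)^3) c < (fun X : ℝ => X^2*(θ - X)^3) Xm := by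
      simp only
      have h16m : (0:ℝ) < 16*L^2 := by positivity
      nlinarith [h16c, hEq16, h16m]
    have : Xm < c := by
      by_contra hcon
      push_neg at hcon
      rcases eq_or_lt_of_le hcon with heq | hlt
      · rw [heq] at hgc; exact lt_irrefl _ hgc
      · exact absurd (g_anti θ hθ hcIcc hXmIcc hlt) (not_lt.2 (le_of_lt hgc))
    nlinarith [this, pow_pos hα 3, hc4]

lemma tilde_lemma (α θ L Xm : ℝ) (hα : 0 < α) (hL : 0 < L) (hXm0 : 0 < Xm)
    (hXmθ : Xm < θ) (hXmc : 4*α^3*Xm < L^2)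
    (hEq16 : 16*L^2*(Xm^2*(θ - Xm)^3) = 1) : Xm < θ - α^2/L^2 := by
  by_contra hcon
  push_neg at hcon
  have h1 : L^2*(θ - Xm) ≤ α^2 := by
    have : θ - Xm ≤ α^2/L^2 := by linarith
    rw [le_div_iff₀ (pow_pos hL 2)] at this
    linarith
  have h2 : (L^2*(θ - Xm))^3 ≤ (α^2)^3 :=
    pow_le_pow_left₀ (by nlinarith [pow_pos hL 2]) h1 3
  have h3 : 16*α^6*Xm^2 < L^4 := by nlinarith [hXmc, mul_pos (pow_pos hα 3) hXm0]
  have hEqL : 16*Xm^2*(L^2*(θ - Xm))^3 = L^4 := by linear_combination L^4*hEq16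
  nlinarith [mul_le_mul_of_nonneg_left h2 (by positivity : (0:ℝ) ≤ 16*Xm^2), hEqL, h3]

lemma fXm_neg_lemma (θ L Xm : ℝ) (hL : 0 < L) (hXm0 : 0 < Xm) (hXmθ : Xm < θ)
    (hXm45 : 4*θ/5 < Xm)
    (hEq : (1/2) * (θ - Xm) ^ (-(3:ℝ)/2) = 2*L*Xm) : f θ L Xm < 0 := by
  have hyXm : 0 < θ - Xm := by linarith
  obtain ⟨hr, hr2, hneg, hhalf⟩ := rpow_pack (θ - Xm) hyXm
  set r := (θ - Xm) ^ ((3:ℝ)/2)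
  rw [f, if_neg (ne_of_gt hXm0), hhalf]
  have h4 : 4*L*Xm*r = 1 := by
    rw [hneg] at hEq
    field_simp at hEq
    nlinarith [hr]
  have hnum : L*Xm^2*r = Xm/4 := by linear_combination (Xm/4)*h4
  rw [show (θ - Xm)/r - L*Xm^2 = ((θ - Xm) - L*Xm^2*r)/r by field_simp]
  apply div_neg_of_neg_of_pos _ hr
  rw [hnum]
  linarith

lemma fX_pos_lemma (θ L X : ℝ) (hθ : 0 < θ) (hL : 0 < L) (hX0 : 0 < X)
    (hX25 : X ≤ 2*θ/5) (hXg : 16*L^2*(X^2*(θ - X)^3) ≤ 1) : 0 < f θ L X := by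
  have hy : 0 < θ - X := by linarith
  obtain ⟨hr, hr2, hneg, hhalf⟩ := rpow_pack (θ - X) hy
  set r := (θ - X) ^ ((3:ℝ)/2)
  rw [f, if_neg (ne_of_gt hX0), hhalf]
  have h16' : 16*L^2*X^2*r^2 ≤ 1 := by rw [← hr2] at hXg; linarith
  have key : 4*L*X*r ≤ 1 := by
    nlinarith [mul_pos (mul_pos (mul_pos (by norm_num : (0:ℝ)<4) hL) hX0) hr]
  have hnum : L*X^2*r ≤ X/4 := by nlinarith [key, hX0]
  rw [show (θ - X)/r - L*X^2 = ((θ - X) - L*X^2*r)/r by field_simp]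
  apply div_pos _ hr
  linarith
set_option maxHeartbeats 1000000 in
/-- For `(θ, L) ∈ D_1` (i.e. `0 < θ ≤ θ*` and `L > L_01(θ)`, or `θ > θ*` and
`L > L_12(θ)`): `L > L_d(θ)`, the critical point `X_m` (the unique point of `(2θ/5, θ)` where
`(1/2)(θ - X)^(-3/2) = 2LX`) satisfies `0 < X_m < θ̃` (so `X_m ∈ D`) and `f(X_m) < 0 = f(0)`,
and `X_m` is the unique global minimizer of `f` on `D`: `f(X) > f(X_m)` for all `X ∈ D`,
`X ≠ X_m`. -/
theorem stmt_15 (α θ L : ℝ) (hα : 0 < α) (hθ : 0 < θ) (hL : 0 < L)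
    (hD1 : (θ ≤ θstar α ∧ L01 θ < L) ∨ (θstar α < θ ∧ L12 α θ < L)) :
    Ld θ < L ∧
    ∃ Xm : ℝ, (Xm ∈ Ioo (2*θ/5) θ ∧ (1/2) * (θ - Xm) ^ (-(3:ℝ)/2) = 2 * L * Xm) ∧
      (∀ X ∈ Ioo (2*θ/5) θ, (1/2) * (θ - X) ^ (-(3:ℝ)/2) = 2 * L * X → X = Xm) ∧
      0 < Xm ∧ Xm < θ - α^2/L^2 ∧
      f θ L Xm < 0 ∧ f θ L 0 = 0 ∧
      (∀ X ∈ Icc (0:ℝ) (max (θ - α^2/L^2) 0), X ≠ Xm → f θ L Xm < f θ L X) := by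
  have hfacts : 3125 < 256*θ^5*L^2 ∧ 4*α^3*θ*L^2 < L^4 + 4*α^5 ∧ 8*α^3*θ < 5*L^2 := by
    rcases hD1 with ⟨h1, h2⟩ | ⟨h1, h2⟩
    · have ha := theta_of_le α θ hα hθ h1
      have hP2 : 3125 < 256*θ^5*L^2 := by
        have h0 : 0 ≤ L01 θ := by rw [L01]; positivity
        have hsq : (L01 θ)^2 < L^2 := by nlinarith [h2]
        rw [L01_sq θ hθ, div_lt_iff₀ (by positivity)] at hsq
        nlinarith [hsq]
      obtain ⟨hq, hc⟩ := branch1_facts α θ L hα hθ hL ha hP2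
      exact ⟨hP2, hq, hc⟩
    · exact branch2_facts α θ L hα hθ hL (theta_of_gt α θ hα hθ h1) h2
  obtain ⟨P2, P3, P4⟩ := hfacts
  clear hD1
  have P1 : 3125 < 1728*θ^5*L^2 := by nlinarith [mul_pos (pow_pos hθ 5) (pow_pos hL 2)]
  have hLd : Ld θ < L := by
    have h0 : 0 ≤ Ld θ := by rw [Ld]; positivity
    have hsq : (Ld θ)^2 < L^2 := by
      rw [Ld_sq θ hθ, div_lt_iff₀ (by positivity)]
      nlinarith [P1]
    nlinarith [hsq, h0, hL]
  -- existence of Xm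
  have hgθ : (fun X : ℝ => X^2*(θ - X)^3) θ = 0 := by simp
  have hg25 : 1/(16*L^2) < (fun X : ℝ => X^2*(θ - X)^3) (2*θ/5) := by
    simp only
    rw [div_lt_iff₀ (by positivity)]
    nlinarith [P1]
  have hcont : ContinuousOn (fun X : ℝ => X^2*(θ - X)^3) (Icc (2*θ/5) θ) :=
    Continuous.continuousOn (by continuity)
  obtain ⟨Xm, hXmIoo, hgXm⟩ := intermediate_value_Ioo' (by linarith : 2*θ/5 ≤ θ) hcont
    (⟨by rw [hgθ]; positivity, hg25⟩ : 1/(16*L^2) ∈ Ioo ((fun X : ℝ => X^2*(θ - X)^3) θ)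
      ((fun X : ℝ => X^2*(θ - X)^3) (2*θ/5)))
  simp only at hgXm
  clear hgθ hg25 hcont
  obtain ⟨hXm25, hXmθ⟩ := hXmIoo
  have hXm0 : 0 < Xm := by linarith
  have hXmIcc : Xm ∈ Icc (2*θ/5) θ := ⟨hXm25.le, hXmθ.le⟩
  have hEq16 : 16*L^2*(Xm^2*(θ - Xm)^3) = 1 := by
    rw [hgXm]; field_simp
  have hEq : (1/2) * (θ - Xm) ^ (-(3:ℝ)/2) = 2*L*Xm := (eq_iff' θ L Xm hXm0 hXmθ hL).2 hEq16
  have hf0 : f θ L 0 = 0 := by simp [f]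
  have hXm45 : 4*θ/5 < Xm := Xm45_lemma θ L Xm hθ hL P2 hXmIcc hEq16
  have hXmc : 4*α^3*Xm < L^2 := Xmc_lemma α θ L Xm hα hθ hL hXm25 hXmθ hEq16 P3 P4
  have hXmt : Xm < θ - α^2/L^2 := tilde_lemma α θ L Xm hα hL hXm0 hXmθ hXmc hEq16
  have hfXm : f θ L Xm < 0 := fXm_neg_lemma θ L Xm hL hXm0 hXmθ hXm45 hEq
  refine ⟨hLd, Xm, ⟨⟨hXm25, hXmθ⟩, hEq⟩, ?_, hXm0, hXmt, hfXm, hf0, ?_⟩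
  · -- uniqueness
    intro X hX hXeq
    have hX0 : 0 < X := by have := hX.1; linarith
    have h16 := (eq_iff' θ L X hX0 hX.2 hL).1 hXeq
    have hgX : (fun X : ℝ => X^2*(θ - X)^3) X = (fun X : ℝ => X^2*(θ - X)^3) Xm := by
      simp only
      rw [hgXm]
      rw [eq_div_iff (by positivity : (16:ℝ)*L^2 ≠ 0)]
      linarith
    exact (g_anti θ hθ).injOn ⟨hX.1.le, hX.2.le⟩ hXmIcc hgX
  · -- minimality
    intro X hX hne
    have htpos : 0 < θ - α^2/L^2 := by linarith
    rw [max_eq_left htpos.le] at hX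
    obtain ⟨hX0, hXup⟩ := hX
    have hθt : θ - α^2/L^2 < θ := by
      have : 0 < α^2/L^2 := by positivity
      linarith
    rcases eq_or_lt_of_le hX0 with h0 | hX0'
    · rw [← h0, hf0]; exact hfXm
    · have hXθ : X < θ := by linarith
      have hfX : f θ L X = (θ - X) ^ (-(1:ℝ)/2) - L*X^2 := by
        rw [f, if_neg (ne_of_gt hX0')]
      have hfXm' : f θ L Xm = (θ - Xm) ^ (-(1:ℝ)/2) - L*Xm^2 := by
        rw [f, if_neg (ne_of_gt hXm0)]
      rcases lt_trichotomy X Xm with hlt | heq | hgt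
      · by_cases hXg : 1 < 16*L^2*(X^2*(θ - X)^3)
        · have hdec := F_dec θ L X Xm hL hX0' hlt hXmθ ?_
          · rw [hfX, hfXm']; exact hdec
          · intro Y hY
            by_cases hY25 : Y ≤ 2*θ/5
            · have hXle : X ∈ Icc (0:ℝ) (2*θ/5) := ⟨hX0'.le, by linarith [hY.1]⟩
              have hYle : Y ∈ Icc (0:ℝ) (2*θ/5) := ⟨by linarith [hY.1], hY25⟩
              have h1 := g_mono θ hθ hXle hYle hY.1
              simp only at h1
              have h' := mul_lt_mul_of_pos_left h1 (by positivity : (0:ℝ) < 16*L^2)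
              linarith [h', hXg]
            · push_neg at hY25
              have hYIcc : Y ∈ Icc (2*θ/5) θ := ⟨hY25.le, by linarith [hY.2]⟩
              have h1 := g_anti θ hθ hYIcc hXmIcc hY.2
              simp only at h1
              have h' := mul_lt_mul_of_pos_left h1 (by positivity : (0:ℝ) < 16*L^2)
              linarith [h', hEq16]
        · push_neg at hXg
          have hX25 : X ≤ 2*θ/5 := by
            by_contra hc
            push_neg at hc
            have h1 := g_anti θ hθ ⟨hc.le, hXθ.le⟩ hXmIcc hlt
            simp only at h1
            have h' := mul_lt_mul_of_pos_left h1 (by positivity : (0:ℝ) < 16*L^2)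
            linarith [h', hEq16, hXg]
          have := fX_pos_lemma θ L X hθ hL hX0' hX25 hXg
          linarith
      · exact absurd heq hne
      · have hinc := F_inc θ L Xm X hL hXm0 hgt hXθ ?_
        · rw [hfX, hfXm']; exact hinc
        · intro Y hY
          have hYIcc : Y ∈ Icc (2*θ/5) θ := ⟨by linarith [hY.1], by linarith [hY.2]⟩
          have h1 := g_anti θ hθ hXmIcc hYIcc hY.1
          simp only at h1
          have h' := mul_lt_mul_of_pos_left h1 (by positivity : (0:ℝ) < 16*L^2)
          linarith [h', hEq16]
end

section
/- For every (θ, L) ∈ D_2 ∪ Γ_12, one has θ̃ > 0, f(θ̃) < 0 = f(0), and θ̃ is the unique global minimizer of f on D: f(X) > f(θ̃) for every X ∈ D with X ≠ θ̃. -/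
open Real Set

lemma cross_lemma (c x y : ℝ) (hc : 0 < c) (hx : 0 < x) (hxy : x < y) :
    (4*x^3+3*c*x^2)*(2*y+c) < (4*y^3+3*c*y^2)*(2*x+c) := by
  have hy : 0 < y := hx.trans hxy
  have hb : 0 < 8*x*y*(y+x) + 4*c*(y^2+x*y+x^2) + 6*c*x*y + 3*c^2*(y+x) := by positivity
  nlinarith [mul_pos (sub_pos.2 hxy) hb]

lemma deriv_prop (A c x y : ℝ) (hc : 0 < c) (hx : 0 < x) (hxy : x < y)
    (h : A*(2*x+c) ≤ 4*x^3 + 3*c*x^2) : A*(2*y+c) < 4*y^3 + 3*c*y^2 := by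
  have h2x : (0:ℝ) < 2*x + c := by linarith
  have h2y : (0:ℝ) < 2*y + c := by linarith
  have h1 : A*(2*y+c)*(2*x+c) ≤ (4*x^3+3*c*x^2)*(2*y+c) := by
    have := mul_le_mul_of_nonneg_right h h2y.le
    nlinarith [this]
  have h2 := lt_of_le_of_lt h1 (cross_lemma c x y hc hx hxy)
  have h3 : A*(2*y+c)*(2*x+c) < (4*y^3+3*c*y^2)*(2*x+c) := h2
  exact lt_of_mul_lt_mul_right h3 h2x.le

lemma Pmin (c s S : ℝ) (hc : 0 < c) (hcs : c < s) (hsS : s < S) :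
    4*c^2*(S^2-c^2) < s*(s+c)*(2*S^2-c^2-s^2) ∨
    S*(S+c)*(S^2-c^2) < s*(s+c)*(2*S^2-c^2-s^2) := by
  set A : ℝ := 2*S^2-c^2 with hA
  set g : ℝ → ℝ := fun t => A*t^2 + A*c*t - (t^4 + c*t^3) with hg
  have hs0 : 0 < s := hc.trans hcs
  have hgd : ∀ t : ℝ, HasDerivAt g (A*(2*t) + A*c - (4*t^3 + c*(3*t^2))) t := by
    intro t
    have h2t : HasDerivAt (fun t:ℝ => t^2) (2*t) t := by simpa using hasDerivAt_pow 2 t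
    have h3t : HasDerivAt (fun t:ℝ => t^3) (3*t^2) t := by simpa using hasDerivAt_pow 3 t
    have h4t : HasDerivAt (fun t:ℝ => t^4) (4*t^3) t := by simpa using hasDerivAt_pow 4 t
    have hid : HasDerivAt (fun t:ℝ => t) 1 t := hasDerivAt_id t
    have := ((h2t.const_mul A).add ((hid.const_mul (A*c)))).sub (h4t.add (h3t.const_mul c))
    exact this.congr_deriv (by ring)
  have hcont : Continuous g := by fun_prop
  by_cases hPs : A*(2*s+c) ≤ 4*s^3 + 3*c*s^2
  · right
    have anti : StrictAntiOn g (Icc s S) := by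
      apply strictAntiOn_of_deriv_neg (convex_Icc s S) hcont.continuousOn
      intro t ht
      rw [interior_Icc] at ht
      have hd := deriv_prop A c s t hc hs0 ht.1 hPs
      rw [(hgd t).deriv]
      nlinarith [hd]
    have h1 := anti (left_mem_Icc.2 hsS.le) (right_mem_Icc.2 hsS.le) hsS
    have e1 : g S = S*(S+c)*(S^2-c^2) := by rw [hg]; dsimp only; rw [hA]; ring
    have e2 : g s = s*(s+c)*(2*S^2-c^2-s^2) := by rw [hg]; dsimp only; rw [hA]; ring
    rw [e1, e2] at h1
    exact h1
  · left
    push_neg at hPs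
    have mono : StrictMonoOn g (Icc c s) := by
      apply strictMonoOn_of_deriv_pos (convex_Icc c s) hcont.continuousOn
      intro t ht
      rw [interior_Icc] at ht
      rw [(hgd t).deriv]
      by_contra hcon
      push_neg at hcon
      have : A*(2*t+c) ≤ 4*t^3 + 3*c*t^2 := by nlinarith [hcon]
      have := deriv_prop A c t s hc (hc.trans ht.1) ht.2 this
      linarith
    have h1 := mono (left_mem_Icc.2 hcs.le) (right_mem_Icc.2 hcs.le) hcs
    have e1 : g c = 4*c^2*(S^2-c^2) := by rw [hg]; dsimp only; rw [hA]; ring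
    have e2 : g s = s*(s+c)*(2*S^2-c^2-s^2) := by rw [hg]; dsimp only; rw [hA]; ring
    rw [e1, e2] at h1
    exact h1

lemma keyMain (α c s S : ℝ) (hα : 0 < α) (hc : 0 < c) (hcs : c < s) (hsS : s < S)
    (h1 : 1 < α*(S^2-c^2)^2) (h2 : 1 ≤ 4*α*c^2*(S^2-c^2)) :
    1 < α*(s*(s+c)*(2*S^2-c^2-s^2)) := by
  have hcS : c < S := hcs.trans hsS
  have hSc : 0 < S^2 - c^2 := by nlinarith
  rcases Pmin c s S hc hcs hsS with h|h
  · have := mul_lt_mul_of_pos_left h hα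
    nlinarith [this]
  · have hS2 : (S^2-c^2)^2 < S*(S+c)*(S^2-c^2) := by nlinarith [mul_pos hc hSc, mul_pos (hc.trans hcs |>.trans hsS) hc]
    have := mul_lt_mul_of_pos_left h hα
    nlinarith [this, mul_lt_mul_of_pos_left hS2 hα]


lemma aux2 (α sa θ L B : ℝ) (hα : 0 < α) (hsa : 0 < sa) (hsa2 : sa^2 = α)
    (h54 : 5/4 < sa*θ) (hL : 0 < L) (hB0 : 0 ≤ B) (hB2 : B^2 = α^2*θ^2 - α)
    (hlow : α^2*sa < L^2*(sa*θ-1)) (hup : L^2 ≤ 2*α^3*θ + 2*α^2*B) :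
    L^2*L^2 + 4*α^5 ≤ 4*α^3*θ*L^2 := by
  have h1pos : (0:ℝ) < sa*θ - 1 := by linarith
  have hθpos : 0 < θ := by
    by_contra h
    push_neg at h
    nlinarith [mul_nonneg hsa.le (neg_nonneg.2 h)]
  have hsa4 : sa^4 = α^2 := by rw [← hsa2]; ring
  have hBge : sa^2*θ - 2*sa ≤ B := by
    rcases le_or_gt (sa^2*θ - 2*sa) 0 with h|h
    · linarith
    · by_contra hcon
      push_neg at hcon
      nlinarith [mul_pos (sub_pos.2 hcon) (by linarith : (0:ℝ) < (sa^2*θ - 2*sa) + B), hB2, hsa4, mul_pos hsa hsa]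
  have hTpos : 0 < α*θ + B := by positivity
  have hgoal2 : 2*α^3*(sa*θ-1) ≤ α^2*sa*(α*θ+B) := by
    have h := mul_le_mul_of_nonneg_left hBge (by positivity : (0:ℝ) ≤ α^2*sa)
    have e1 : α^2*sa*(sa^2*θ - 2*sa) = α^3*(sa*θ) - 2*α^3 := by
      linear_combination (α^2*sa*θ - 2*α^2)*hsa2
    nlinarith [h, e1]
  have hXc : (2*α^3*θ - 2*α^2*B)*(sa*θ-1)*(α*θ+B) = 2*α^3*(sa*θ-1) := by
    linear_combination ((sa*θ-1)*(-2*α^2))*hB2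
  have ht : (2*α^3*θ - 2*α^2*B)*(sa*θ-1) ≤ α^2*sa := by
    have h' : (2*α^3*θ - 2*α^2*B)*(sa*θ-1)*(α*θ+B) ≤ (α^2*sa)*(α*θ+B) := by
      rw [hXc]; exact hgoal2
    exact le_of_mul_le_mul_right h' hTpos
  have hlowL : 2*α^3*θ - 2*α^2*B < L^2 :=
    lt_of_mul_lt_mul_right (lt_of_le_of_lt ht hlow) h1pos.le
  have hprod : (2*α^3*θ - 2*α^2*B)*(2*α^3*θ + 2*α^2*B) = 4*α^5 := by
    linear_combination (-4*α^4)*hB2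
  nlinarith [mul_nonneg (sub_nonneg.2 hlowL.le) (sub_nonneg.2 hup), hprod]

lemma rpow_half_inv (x : ℝ) (hx : 0 < x) : x ^ (-(1:ℝ)/2) = (Real.sqrt x)⁻¹ := by
  rw [show (-(1:ℝ)/2) = -((1:ℝ)/2) by ring, Real.rpow_neg hx.le, ← Real.sqrt_eq_rpow]


set_option maxHeartbeats 2000000 in
/-- For `(θ, L) ∈ D_2 ∪ Γ_12` (i.e. `θ > θ*` and `L_02(θ) < L ≤ L_12(θ)`):
`θ̃ > 0`, `f(θ̃) < 0 = f(0)`, and `θ̃` is the unique global minimizer of `f` on `D`: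
`f(X) > f(θ̃)` for every `X ∈ D` with `X ≠ θ̃`. -/
theorem stmt_16 (α θ L : ℝ) (hα : 0 < α) (hθ : θstar α < θ)
    (hD : L02 α θ < L ∧ L ≤ L12 α θ) :
    0 < θ - α^2/L^2 ∧
    f θ L (θ - α^2/L^2) < 0 ∧ f θ L 0 = 0 ∧
    (∀ X ∈ Icc (0:ℝ) (max (θ - α^2/L^2) 0), X ≠ θ - α^2/L^2 →
      f θ L (θ - α^2/L^2) < f θ L X) := by
  set sa := Real.sqrt α with hsadef
  have hsa : 0 < sa := Real.sqrt_pos.2 hα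
  have hsa2 : sa^2 = α := Real.sq_sqrt hα.le
  -- θ* condition
  have hst : θstar α = (5/4) * sa⁻¹ := by
    rw [θstar, rpow_half_inv α hα]
  have h54 : 5/4 < sa*θ := by
    rw [hst] at hθ
    have := (mul_lt_mul_of_pos_left hθ hsa)
    calc (5:ℝ)/4 = sa * ((5/4) * sa⁻¹) := by field_simp
    _ < sa * θ := this
  have hθpos : 0 < θ := by
    by_contra h
    push_neg at h
    nlinarith [mul_nonneg hsa.le (neg_nonneg.2 h)]
  have h1pos : (0:ℝ) < sa*θ - 1 := by linarith
  -- L positivity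
  have hL02pos : 0 < L02 α θ := by
    rw [L02]
    have := Real.rpow_pos_of_pos hα ((5:ℝ)/4)
    have := Real.rpow_pos_of_pos h1pos (-(1:ℝ)/2)
    rw [← hsadef]
    positivity
  have hL : 0 < L := hL02pos.trans hD.1
  -- square of L02
  have hL02sq : (L02 α θ)^2 = α^2*sa*(sa*θ-1)⁻¹ := by
    rw [L02, mul_pow, ← hsadef]
    congr 1
    · rw [← Real.rpow_natCast (α ^ ((5:ℝ)/4)) 2, ← Real.rpow_mul hα.le]
      rw [show (5:ℝ)/4*(2:ℕ) = 2 + 1/2 by push_cast; ring, Real.rpow_add hα, ← Real.sqrt_eq_rpow]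
      norm_num [Real.rpow_two, hsadef]
    · rw [← Real.rpow_natCast ((sa*θ-1) ^ (-(1:ℝ)/2)) 2, ← Real.rpow_mul h1pos.le]
      norm_num [Real.rpow_neg_one]
  -- lower bound: α² sa < L² (saθ - 1)
  have hlow : α^2*sa < L^2*(sa*θ-1) := by
    have hsq : (L02 α θ)^2 < L^2 := by
      have := pow_lt_pow_left₀ hD.1 hL02pos.le (by norm_num : 2 ≠ 0)
      exact this
    rw [hL02sq] at hsq
    calc α^2*sa = α^2*sa*(sa*θ-1)⁻¹*(sa*θ-1) := by field_simp
    _ < L^2*(sa*θ-1) := by exact mul_lt_mul_of_pos_right hsq h1pos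
  -- θ tilde > 1/sa, positivity
  have hi : 1 < sa*(θ - α^2/L^2) := by
    have e : sa*(θ - α^2/L^2) - 1 = (L^2*(sa*θ-1) - α^2*sa)/L^2 := by
      field_simp
      ring
    have : 0 < sa*(θ - α^2/L^2) - 1 := by
      rw [e]
      exact div_pos (by linarith) (by positivity)
    linarith
  have htil : 0 < θ - α^2/L^2 := by nlinarith [hi, hsa, mul_pos hsa (div_pos (by positivity : (0:ℝ) < α^2) (by positivity : (0:ℝ) < L^2))]
  -- upper bound via L12
  have hαθ2 : 0 ≤ α*(α*θ^2 - 1) := by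
    have : (1:ℝ) < (sa*θ)^2 := by nlinarith [h54]
    nlinarith [hsa2, this]
  set B := Real.sqrt (α*(α*θ^2 - 1)) with hBdef
  have hB0 : 0 ≤ B := Real.sqrt_nonneg _
  have hB2 : B^2 = α^2*θ^2 - α := by
    rw [hBdef, Real.sq_sqrt hαθ2]; ring
  have hup : L^2 ≤ 2*α^3*θ + 2*α^2*B := by
    have hnn : 0 ≤ 2*α^3*θ + 2*α^2*B := by positivity
    have := pow_le_pow_left₀ hL.le hD.2 2
    rw [L12, ← hBdef] at this
    rwa [Real.sq_sqrt hnn] at this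
  have haux := aux2 α sa θ L B hα hsa hsa2 h54 hL hB0 hB2 hlow hup
  -- h2 condition : 1 ≤ 4α c² θtil with c² = α²/L²
  have hc2cond : 1 ≤ 4*α*(α^2/L^2)*(θ - α^2/L^2) := by
    have e : 4*α*(α^2/L^2)*(θ - α^2/L^2) - 1 = (4*α^3*θ*L^2 - 4*α^5 - L^2*L^2)/(L^2*L^2) := by
      field_simp
    have : 0 ≤ 4*α*(α^2/L^2)*(θ - α^2/L^2) - 1 := by
      rw [e]
      apply div_nonneg _ (by positivity)
      linarith
    linarith
  -- h1 condition: 1 < α θtil²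
  have h1cond : 1 < α*(θ - α^2/L^2)^2 := by nlinarith [hi, hsa2, htil]
  -- f at θ tilde
  have hne : θ - α^2/L^2 ≠ 0 := ne_of_gt htil
  have hcval : Real.sqrt (α^2/L^2) = α/L := by
    rw [show α^2/L^2 = (α/L)^2 by ring, Real.sqrt_sq (by positivity)]
  have hftil : f θ L (θ - α^2/L^2) = (α/L)⁻¹ - L*(θ - α^2/L^2)^2 := by
    rw [f, if_neg hne, show θ - (θ - α^2/L^2) = α^2/L^2 by ring,
      rpow_half_inv _ (by positivity), hcval]
  have hfneg : f θ L (θ - α^2/L^2) < 0 := by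
    rw [hftil, inv_div, sub_neg, div_lt_iff₀ hα]
    have := mul_lt_mul_of_pos_left h1cond hL
    linarith
  refine ⟨htil, hfneg, by rw [f]; simp, ?_⟩
  -- main minimality
  intro X hX hXne
  rw [max_eq_left htil.le] at hX
  rcases eq_or_lt_of_le hX.1 with h0|h0
  · subst h0
    simpa [f] using hfneg
  · -- 0 < X < θ tilde
    have hXlt : X < θ - α^2/L^2 := lt_of_le_of_ne hX.2 hXne
    have hθX : 0 < θ - X := by
      have : (0:ℝ) < α^2/L^2 := by positivity
      linarith
    set s := Real.sqrt (θ - X) with hsdef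
    set S := Real.sqrt θ with hSdef
    have hspos : 0 < s := Real.sqrt_pos.2 hθX
    have hs2 : s^2 = θ - X := Real.sq_sqrt hθX.le
    have hS2 : S^2 = θ := Real.sq_sqrt hθpos.le
    have hcpos : 0 < α/L := by positivity
    have hc2 : (α/L)^2 = α^2/L^2 := by rw [div_pow]
    have hcs : α/L < s := by
      rw [hsdef, Real.lt_sqrt hcpos.le, hc2]
      linarith
    have hsS : s < S := Real.sqrt_lt_sqrt hθX.le (by linarith)
    have hdiff : S^2 - (α/L)^2 = θ - α^2/L^2 := by rw [hS2, hc2]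
    have hkey := keyMain α (α/L) s S hα hcpos hcs hsS
      (by rw [hdiff]; exact h1cond)
      (by rw [hdiff, hc2]; exact hc2cond)
    have hfX : f θ L X = s⁻¹ - L*X^2 := by
      rw [f, if_neg (ne_of_gt h0), rpow_half_inv _ hθX]
    have hθ' : θ = S^2 := hS2.symm
    have hX' : X = S^2 - s^2 := by rw [hS2]; linarith [hs2]
    have hsne : s ≠ 0 := ne_of_gt hspos
    have hLne : L ≠ 0 := ne_of_gt hL
    have hαne : α ≠ 0 := ne_of_gt hα
    have hident : (s⁻¹ - L*X^2) - ((α/L)⁻¹ - L*(θ - α^2/L^2)^2)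
        = (s - α/L)/((α/L)*s) * (α*(s*(s+α/L)*(2*S^2-(α/L)^2-s^2)) - 1) := by
      rw [hθ', hX']
      field_simp
      ring
    have hposfac : 0 < (s - α/L)/((α/L)*s) := div_pos (by linarith) (by positivity)
    have hprodpos := mul_pos hposfac (by linarith [hkey] : 0 < α*(s*(s+α/L)*(2*S^2-(α/L)^2-s^2)) - 1)
    rw [hfX, hftil]
    linarith [hident, hprodpos]
end
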